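/- Let d ≥ 2, let X^1,…,X^d be measurable spaces, and let k^j : X^j × X^j → ℝ be jointly measurable with 0 ≤ k^j ≤ K^j. Let P be a probability measure on X^1 × ⋯ × X^d with marginals P_1,…,P_d, let H be a real Hilbert space, and let Φ : X^1 × ⋯ × X^d → H be strongly measurable with ⟨Φ(x), Φ(y)⟩ = Π_{j=1}^d k^j(x^j, y^j) for all x, y. Then Φ is Bochner integrable with respect to both P and the product measure P_1 ⊗ ⋯ ⊗ P_d, and ‖ ∫ Φ dP − ∫ Φ d(P_1 ⊗ ⋯ ⊗ P_d) ‖^2 = dHSIC_k(P)^2; in particular dHSIC_k(P)^2 ≥ 0. -/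

import Mathlib

open MeasureTheory Finset

noncomputable section

/-- Squared population dHSIC of a probability measure `P` on the product space,
corresponding to kernels `k j` (with `P.map (fun x => x j)` its `j`-th marginal). -/
def dHSICsqPop {d : ℕ} {X : Fin d → Type*} [∀ j, MeasurableSpace (X j)]
    (k : ∀ j, X j → X j → ℝ) (P : Measure (∀ j, X j)) : ℝ :=
  (∫ x, ∫ y, ∏ j, k j (x j) (y j) ∂P ∂P)
    + (∏ j, (∫ u, (∫ v, k j u v ∂(P.map (fun x => x j))) ∂(P.map (fun x => x j))))
    - 2 * ∫ x, ∏ j, (∫ v, k j (x j) v ∂(P.map (fun x => x j))) ∂P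

/-- the squared population dHSIC is the squared distance between
the mean embedding of `P` and that of the product of its marginals. -/
theorem dHSICsqPop_eq_norm_sq_mean_embedding
    {d : ℕ} (hd : 2 ≤ d)
    (X : Fin d → Type*) [∀ j, MeasurableSpace (X j)]
    (k : ∀ j, X j → X j → ℝ) (K : Fin d → ℝ)
    (hkm : ∀ j, Measurable (Function.uncurry (k j)))
    (hbdd : ∀ j, ∀ x y : X j, 0 ≤ k j x y ∧ k j x y ≤ K j)
    (P : Measure (∀ j, X j)) [IsProbabilityMeasure P]
    (H : Type*) [NormedAddCommGroup H] [InnerProductSpace ℝ H] [CompleteSpace H]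
    (Φ : (∀ j, X j) → H) (hΦm : StronglyMeasurable Φ)
    (hΦ : ∀ x y : ∀ j, X j, (inner ℝ (Φ x) (Φ y) : ℝ) = ∏ j, k j (x j) (y j)) :
    Integrable Φ P ∧
    Integrable Φ (Measure.pi (fun j => P.map (fun x => x j))) ∧
    ‖(∫ x, Φ x ∂P) - ∫ x, Φ x ∂(Measure.pi (fun j => P.map (fun x => x j)))‖ ^ 2
        = dHSICsqPop k P ∧
    0 ≤ dHSICsqPop k P := by
  set μ : ∀ j, Measure (X j) := fun j => P.map (fun x => x j) with hμ
  haveI : ∀ j, IsProbabilityMeasure (μ j) := fun j =>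
    Measure.isProbabilityMeasure_map (measurable_pi_apply j).aemeasurable
  set Q : Measure (∀ j, X j) := Measure.pi μ with hQ
  haveI : IsProbabilityMeasure Q := by rw [hQ]; infer_instance
  -- nonemptyness
  have hne : Nonempty (∀ j, X j) := by
    by_contra h
    rw [not_nonempty_iff] at h
    have h1 : P Set.univ = 1 := measure_univ
    rw [Set.univ_eq_empty_iff.2 h, measure_empty] at h1
    exact zero_ne_one h1
  obtain ⟨x₀⟩ := hne
  have hK : ∀ j, (0:ℝ) ≤ K j := fun j =>
    le_trans (hbdd j (x₀ j) (x₀ j)).1 (hbdd j (x₀ j) (x₀ j)).2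
  -- bound on Φ
  have hnorm : ∀ x, ‖Φ x‖ ^ 2 = ∏ j, k j (x j) (x j) := fun x => by
    rw [← real_inner_self_eq_norm_sq, hΦ]
  have hbound : ∀ x, ‖Φ x‖ ≤ Real.sqrt (∏ j, K j) := by
    intro x
    have h1 : ‖Φ x‖ ^ 2 ≤ ∏ j, K j := by
      rw [hnorm]
      exact Finset.prod_le_prod (fun j _ => (hbdd j (x j) (x j)).1)
        (fun j _ => (hbdd j (x j) (x j)).2)
    calc ‖Φ x‖ = Real.sqrt (‖Φ x‖ ^ 2) := by
          rw [Real.sqrt_sq (norm_nonneg _)]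
      _ ≤ Real.sqrt (∏ j, K j) := Real.sqrt_le_sqrt h1
  have hint : ∀ (ν : Measure (∀ j, X j)), IsProbabilityMeasure ν → Integrable Φ ν := by
    intro ν hν
    exact Integrable.mono' (integrable_const (Real.sqrt (∏ j, K j)))
      hΦm.aestronglyMeasurable (Filter.Eventually.of_forall hbound)
  have hintP : Integrable Φ P := hint P inferInstance
  have hintQ : Integrable Φ Q := hint Q inferInstance
  refine ⟨hintP, hintQ, ?_⟩
  -- factorization over the product measure
  have key : ∀ (f : ∀ j, X j → ℝ), ∫ y, ∏ j, f j (y j) ∂Q = ∏ j, ∫ v, f j v ∂(μ j) := by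
    intro f
    letI : ∀ j, MeasureSpace (X j) := fun j => ⟨μ j⟩
    haveI : ∀ j, SigmaFinite (volume : Measure (X j)) := fun j => inferInstanceAs (SigmaFinite (μ j))
    have hQv : Q = volume := rfl
    rw [hQv]
    exact MeasureTheory.integral_fintype_prod_eq_prod (μ := μ) f
  -- inner product of mean embeddings
  have hinner : ∀ (ν₁ ν₂ : Measure (∀ j, X j)), Integrable Φ ν₁ → Integrable Φ ν₂ →
      (inner ℝ (∫ x, Φ x ∂ν₁) (∫ x, Φ x ∂ν₂) : ℝ)
        = ∫ x, ∫ y, ∏ j, k j (x j) (y j) ∂ν₂ ∂ν₁ := by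
    intro ν₁ ν₂ h₁ h₂
    rw [real_inner_comm, ← integral_inner h₁]
    refine integral_congr_ae (Filter.Eventually.of_forall fun x => ?_)
    dsimp only
    rw [real_inner_comm, ← integral_inner h₂]
    exact integral_congr_ae (Filter.Eventually.of_forall fun y => hΦ x y)
  set a : H := ∫ z, Φ z ∂P with ha
  set b : H := ∫ z, Φ z ∂Q with hb
  have hQQ : (inner ℝ b b : ℝ)
      = ∏ j, ∫ u, (∫ v, k j u v ∂(μ j)) ∂(μ j) := by
    rw [hinner Q Q hintQ hintQ]
    have h1 : ∀ x : ∀ j, X j, ∫ y, ∏ j, k j (x j) (y j) ∂Q = ∏ j, ∫ v, k j (x j) v ∂(μ j) :=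
      fun x => key (fun j => k j (x j))
    rw [integral_congr_ae (Filter.Eventually.of_forall h1)]
    exact key (fun j u => ∫ v, k j u v ∂(μ j))
  have hPQ : (inner ℝ a b : ℝ)
      = ∫ x, ∏ j, (∫ v, k j (x j) v ∂(μ j)) ∂P := by
    rw [hinner P Q hintP hintQ]
    exact integral_congr_ae (Filter.Eventually.of_forall fun x => key (fun j => k j (x j)))
  have hPP : (inner ℝ a a : ℝ) = ∫ x, ∫ y, ∏ j, k j (x j) (y j) ∂P ∂P :=
    hinner P P hintP hintP
  have hmain : ‖a - b‖ ^ 2 = dHSICsqPop k P := by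
    rw [norm_sub_sq_real, ← real_inner_self_eq_norm_sq, ← real_inner_self_eq_norm_sq,
      hPP, hQQ, hPQ, dHSICsqPop]
    ring
  exact ⟨hmain, hmain ▸ sq_nonneg _⟩

end
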